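/- For all α > 0, θ > 0, β > 0 and every real r > 0, the rth raw moment of the extended xgamma distribution is ∫₀^∞ x^r · f(x; α, θ, β) dx = (Γ(α+r)/(θ^r · (θ+β) · Γ(α+2))) · (θ·α·(α+1) + β·(α+r)·(α+r+1)). -/

import Mathlib

open MeasureTheory Real

/-- The `r`th raw moment of the extended xgamma distribution. -/
theorem exg_raw_moment (α θ β r : ℝ) (hα : 0 < α) (hθ : 0 < θ) (hβ : 0 < β) (hr : 0 < r) :
    ∫ x in Set.Ioi (0 : ℝ),
        x ^ r * ((θ ^ (α + 1) / ((θ + β) * Real.Gamma (α + 2))) * (α ^ 2 + α + θ * β * x ^ 2) *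
          Real.exp (-θ * x) * x ^ (α - 1))
      = (Real.Gamma (α + r) / (θ ^ r * (θ + β) * Real.Gamma (α + 2))) *
          (θ * α * (α + 1) + β * (α + r) * (α + r + 1)) := by
  set C : ℝ := θ ^ (α + 1) / ((θ + β) * Real.Gamma (α + 2)) with hC
  have hint : ∀ s : ℝ, -1 < s →
      IntegrableOn (fun x : ℝ => x ^ s * Real.exp (-(θ * x))) (Set.Ioi 0) := by
    intro s hs
    have := integrableOn_rpow_mul_exp_neg_mul_rpow hs (p := 1) one_pos hθ
    refine this.congr_fun (fun x hx => ?_) measurableSet_Ioi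
    simp only [Real.rpow_one, neg_mul]
  have h1 : -1 < α + r - 1 := by linarith
  have h2 : -1 < α + r + 1 := by linarith
  have key : ∀ x ∈ Set.Ioi (0 : ℝ),
      x ^ r * (C * (α ^ 2 + α + θ * β * x ^ 2) * Real.exp (-θ * x) * x ^ (α - 1))
        = (C * (α ^ 2 + α)) * (x ^ (α + r - 1) * Real.exp (-(θ * x)))
          + (C * (θ * β)) * (x ^ (α + r + 1) * Real.exp (-(θ * x))) := by
    intro x hx
    have hx : (0 : ℝ) < x := hx
    have e1 : x ^ r * x ^ (α - 1) = x ^ (α + r - 1) := by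
      rw [← Real.rpow_add hx]; ring_nf
    have e2 : x ^ r * (x ^ (2 : ℕ) * x ^ (α - 1)) = x ^ (α + r + 1) := by
      rw [← Real.rpow_natCast x 2, ← Real.rpow_add hx, ← Real.rpow_add hx]
      norm_num; ring_nf
    rw [neg_mul]
    calc x ^ r * (C * (α ^ 2 + α + θ * β * x ^ 2) * Real.exp (-(θ * x)) * x ^ (α - 1))
        = (C * (α ^ 2 + α)) * ((x ^ r * x ^ (α - 1)) * Real.exp (-(θ * x)))
          + (C * (θ * β)) * ((x ^ r * (x ^ (2:ℕ) * x ^ (α - 1))) * Real.exp (-(θ * x))) := by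
          ring
      _ = _ := by rw [e1, e2]
  rw [setIntegral_congr_fun measurableSet_Ioi key,
    integral_add ((hint _ h1).const_mul _) ((hint _ h2).const_mul _),
    MeasureTheory.integral_const_mul, MeasureTheory.integral_const_mul]
  have g1 : ∫ x in Set.Ioi (0:ℝ), x ^ (α + r - 1) * Real.exp (-(θ * x))
      = (1 / θ) ^ (α + r) * Real.Gamma (α + r) :=
    integral_rpow_mul_exp_neg_mul_Ioi (by linarith) hθ
  have g2 : ∫ x in Set.Ioi (0:ℝ), x ^ (α + r + 1) * Real.exp (-(θ * x))
      = (1 / θ) ^ (α + r + 2) * Real.Gamma (α + r + 2) := by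
    have h := integral_rpow_mul_exp_neg_mul_Ioi (show (0:ℝ) < α + r + 2 by linarith) hθ
    rw [show α + r + 2 - 1 = α + r + 1 by ring] at h
    exact h
  rw [g1, g2]
  have hΓ2 : Real.Gamma (α + r + 2) = (α + r + 1) * ((α + r) * Real.Gamma (α + r)) := by
    have a1 : Real.Gamma (α + r + 1) = (α + r) * Real.Gamma (α + r) :=
      Real.Gamma_add_one (by positivity)
    have a2 : Real.Gamma (α + r + 2) = (α + r + 1) * Real.Gamma (α + r + 1) := by
      have h := Real.Gamma_add_one (show (α + r + 1 : ℝ) ≠ 0 by positivity)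
      rw [← h]; ring_nf
    rw [a2, a1]
  have hθne : θ ≠ 0 := hθ.ne'
  have p1 : (1 / θ : ℝ) ^ (α + r) = θ ^ (-(α + r)) := by
    rw [Real.rpow_neg hθ.le, one_div, ← Real.inv_rpow hθ.le]
  have p2 : (1 / θ : ℝ) ^ (α + r + 2) = θ ^ (-(α + r + 2)) := by
    rw [Real.rpow_neg hθ.le, one_div, ← Real.inv_rpow hθ.le]
  rw [hΓ2, p1, p2, hC]
  have hθα : (0:ℝ) < θ ^ (α + 1) := Real.rpow_pos_of_pos hθ _
  have r1 : θ ^ (-(α + r)) = θ * (θ ^ r)⁻¹ / θ ^ (α + 1) := by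
    rw [eq_div_iff hθα.ne', mul_comm, ← Real.rpow_add hθ,
      show α + 1 + -(α + r) = 1 + -r by ring, Real.rpow_add hθ, Real.rpow_one,
      Real.rpow_neg hθ.le]
  have r2 : θ ^ (-(α + r + 2)) = (θ ^ r)⁻¹ * θ⁻¹ / θ ^ (α + 1) := by
    rw [eq_div_iff hθα.ne', mul_comm, ← Real.rpow_add hθ,
      show α + 1 + -(α + r + 2) = -r + -1 by ring, Real.rpow_add hθ,
      Real.rpow_neg hθ.le, Real.rpow_neg_one]
  rw [r1, r2]
  have hΓpos : Real.Gamma (α + 2) ≠ 0 := (Real.Gamma_pos_of_pos (by linarith)).ne'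
  have hθβ : θ + β ≠ 0 := by positivity
  have hθr : (θ : ℝ) ^ r ≠ 0 := (Real.rpow_pos_of_pos hθ r).ne'
  field_simp
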